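/- For every w ∈ L²(0,∞), the function x ↦ cosh(x)·∫ₓ^∞ sech(t)·w(t) dt belongs to L²(0,∞) and its L²(0,∞)-norm is at most 2‖w‖_{L²(0,∞)}; likewise, for every w ∈ L²(-∞,0), the function x ↦ cosh(x)·∫_{-∞}^x sech(t)·w(t) dt belongs to L²(-∞,0) with norm at most 2‖w‖_{L²(-∞,0)}. -/

import Mathlib

open MeasureTheory Real Filter Set
open scoped ENNReal NNReal

lemma sech_pos (t : ℝ) : 0 < (Real.cosh t)⁻¹ := inv_pos.mpr (Real.cosh_pos t)
lemma half_exp_le_cosh (t : ℝ) : Real.exp t / 2 ≤ Real.cosh t := by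
  rw [Real.cosh_eq]
  have := (Real.exp_pos (-t)).le
  linarith

lemma sech_le (t : ℝ) : (Real.cosh t)⁻¹ ≤ 2 * Real.exp (-t) := by
  have h1 : 0 < Real.exp t / 2 := by positivity
  have h2 : (Real.exp t / 2)⁻¹ = 2 * Real.exp (-t) := by
    rw [Real.exp_neg]; field_simp
  rw [← h2]
  exact inv_anti₀ h1 (half_exp_le_cosh t)
lemma sech_mul_exp_le (t : ℝ) : (Real.cosh t)⁻¹ * Real.exp t ≤ 2 := by
  have h := half_exp_le_cosh t
  have hc := Real.cosh_pos t
  rw [inv_mul_le_iff₀ hc]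
  linarith
lemma cosh_le_exp' {x : ℝ} (hx : 0 ≤ x) : Real.cosh x ≤ Real.exp x := by
  rw [Real.cosh_eq]
  have := Real.exp_le_exp.mpr (neg_le_self hx)
  linarith

section
variable (w : ℝ → ℂ)

noncomputable def Af : ℝ → ℝ≥0∞ := fun t => ENNReal.ofReal ((Real.cosh t)⁻¹)
noncomputable def Wf : ℝ → ℝ≥0∞ := fun t => (‖w t‖₊ : ℝ≥0∞)

lemma Af_ne_zero (t : ℝ) : Af t ≠ 0 := (ENNReal.ofReal_pos.mpr (sech_pos t)).ne'
lemma Af_meas : Measurable Af :=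
  (Real.continuous_cosh.inv₀ fun t => (Real.cosh_pos t).ne').measurable.ennreal_ofReal

-- S bound
lemma S_bound (x : ℝ) : ∫⁻ t in Ioi x, Af t ≤ ENNReal.ofReal (2 * Real.exp (-x)) := by
  have h1 : ∫⁻ t in Ioi x, Af t ≤ ∫⁻ t in Ioi x, ENNReal.ofReal (2 * Real.exp (-t)) :=
    lintegral_mono fun t => ENNReal.ofReal_le_ofReal (sech_le t)
  refine h1.trans ?_
  have hint : IntegrableOn (fun t : ℝ => 2 * Real.exp (-t)) (Ioi x) volume := by
    have := (exp_neg_integrableOn_Ioi x one_pos).const_mul 2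
    simpa [IntegrableOn] using this
  rw [← ofReal_integral_eq_lintegral_ofReal hint
    (Eventually.of_forall fun t => by positivity)]
  rw [MeasureTheory.integral_const_mul, integral_exp_neg_Ioi]

-- Cauchy-Schwarz step
lemma CS_bound (hsm : MeasureTheory.StronglyMeasurable w) (x : ℝ) :
    ∫⁻ t in Ioi x, Af t * Wf w t ≤
      (∫⁻ t in Ioi x, Af t) ^ (1/2 : ℝ) * (∫⁻ t in Ioi x, Af t * Wf w t ^ (2:ℝ)) ^ (1/2 : ℝ) := by
  set u : ℝ → ℝ≥0∞ := fun t => Af t ^ (1/2 : ℝ) with hu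
  set v : ℝ → ℝ≥0∞ := fun t => Af t ^ (1/2 : ℝ) * Wf w t with hv
  have husq : ∀ t, u t ^ (2:ℝ) = Af t := by
    intro t
    rw [hu, ← ENNReal.rpow_mul]
    norm_num
  have huv : ∀ t, Af t * Wf w t = (u * v) t := by
    intro t
    simp only [Pi.mul_apply, hu, hv, ← mul_assoc]
    rw [← ENNReal.rpow_add _ _ (Af_ne_zero t) ENNReal.ofReal_ne_top]
    norm_num
  have humeas : AEMeasurable u (volume.restrict (Ioi x)) :=
    (Af_meas.pow_const _).aemeasurable
  have hvmeas : AEMeasurable v (volume.restrict (Ioi x)) :=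
    ((Af_meas.pow_const _).mul
      (hsm.measurable.nnnorm.coe_nnreal_ennreal)).aemeasurable
  have hconj : Real.HolderConjugate 2 2 := Real.HolderConjugate.two_two
  have hCS := ENNReal.lintegral_mul_le_Lp_mul_Lq (volume.restrict (Ioi x)) hconj humeas hvmeas
  have hL : ∫⁻ t in Ioi x, Af t * Wf w t = ∫⁻ t in Ioi x, (u * v) t := lintegral_congr huv
  have hR1 : ∫⁻ t in Ioi x, u t ^ (2:ℝ) = ∫⁻ t in Ioi x, Af t := lintegral_congr husq
  have hR2 : ∫⁻ t in Ioi x, v t ^ (2:ℝ) = ∫⁻ t in Ioi x, Af t * Wf w t ^ (2:ℝ) := by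
    refine lintegral_congr fun t => ?_
    rw [hv]
    simp only []
    rw [ENNReal.mul_rpow_of_nonneg _ _ (by norm_num : (0:ℝ) ≤ 2), husq t]
  rw [hL, ← hR1, ← hR2]
  exact hCS
-- pointwise bound
lemma pt_bound (hsm : MeasureTheory.StronglyMeasurable w) {x : ℝ} (hx : 0 ≤ x) :
    (‖Real.cosh x • ∫ t in Ioi x, (Real.cosh t)⁻¹ • w t‖₊ : ℝ≥0∞) ^ (2:ℝ)
      ≤ ENNReal.ofReal (2 * Real.exp x) * ∫⁻ t in Ioi x, Af t * Wf w t ^ (2:ℝ) := by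
  have h1 : (‖Real.cosh x • ∫ t in Ioi x, (Real.cosh t)⁻¹ • w t‖₊ : ℝ≥0∞)
      ≤ ENNReal.ofReal (Real.cosh x) * ∫⁻ t in Ioi x, Af t * Wf w t := by
    rw [nnnorm_smul]
    push_cast
    rw [show ((‖Real.cosh x‖₊ : ℝ≥0∞)) = ENNReal.ofReal (Real.cosh x) from Real.enorm_eq_ofReal (Real.cosh_pos x).le]
    refine mul_le_mul_right ?_ _
    refine (enorm_integral_le_lintegral_enorm _).trans ?_
    refine lintegral_mono fun t => ?_
    rw [enorm_smul]
    push_cast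
    rw [Real.enorm_eq_ofReal (sech_pos t).le]
    exact le_rfl
  have h2 := (h1.trans (mul_le_mul_right (CS_bound w hsm x) _))
  have h3 := ENNReal.rpow_le_rpow h2 (by norm_num : (0:ℝ) ≤ 2)
  refine h3.trans ?_
  rw [ENNReal.mul_rpow_of_nonneg _ _ (by norm_num : (0:ℝ) ≤ 2),
      ENNReal.mul_rpow_of_nonneg _ _ (by norm_num : (0:ℝ) ≤ 2),
      ← ENNReal.rpow_mul, ← ENNReal.rpow_mul]
  rw [show (1/2:ℝ)*2 = 1 by norm_num, ENNReal.rpow_one, ENNReal.rpow_one, ← mul_assoc]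
  refine mul_le_mul_left ?_ _
  calc ENNReal.ofReal (Real.cosh x) ^ (2:ℝ) * (∫⁻ t in Ioi x, Af t)
      ≤ ENNReal.ofReal (Real.cosh x) ^ (2:ℝ) * ENNReal.ofReal (2 * Real.exp (-x)) :=
        mul_le_mul_right (S_bound x) _
    _ = ENNReal.ofReal (Real.cosh x ^ (2:ℝ)) * ENNReal.ofReal (2 * Real.exp (-x)) := by
        rw [ENNReal.ofReal_rpow_of_pos (Real.cosh_pos x)]
    _ = ENNReal.ofReal (Real.cosh x ^ (2:ℝ) * (2 * Real.exp (-x))) :=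
        (ENNReal.ofReal_mul (by positivity)).symm
    _ ≤ ENNReal.ofReal (2 * Real.exp x) := by
        refine ENNReal.ofReal_le_ofReal ?_
        rw [Real.rpow_two]
        have hc := cosh_le_exp' hx
        have hee : Real.exp x * Real.exp (-x) = 1 := by
          rw [← Real.exp_add]; simp
        nlinarith [Real.cosh_pos x, Real.exp_pos x, Real.exp_pos (-x)]
lemma J_bound (hsm : MeasureTheory.StronglyMeasurable w) :
    ∫⁻ x in Ioi (0:ℝ), (‖Real.cosh x • ∫ t in Ioi x, (Real.cosh t)⁻¹ • w t‖₊ : ℝ≥0∞) ^ (2:ℝ)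
      ≤ 4 * ∫⁻ t in Ioi (0:ℝ), Wf w t ^ (2:ℝ) := by
  set f : ℝ → ℝ≥0∞ := fun t => Af t * Wf w t ^ (2:ℝ) with hf
  have hfmeas : Measurable f :=
    Af_meas.mul ((hsm.measurable.nnnorm.coe_nnreal_ennreal).pow_const _)
  set K : ℝ → ℝ → ℝ≥0∞ := fun x t => ENNReal.ofReal (2 * Real.exp x) * (Ioi x).indicator f t
    with hK
  have step1 : ∫⁻ x in Ioi (0:ℝ),
        (‖Real.cosh x • ∫ t in Ioi x, (Real.cosh t)⁻¹ • w t‖₊ : ℝ≥0∞) ^ (2:ℝ)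
      ≤ ∫⁻ x in Ioi (0:ℝ), ENNReal.ofReal (2 * Real.exp x) * ∫⁻ t in Ioi x, f t :=
    lintegral_mono_ae ((ae_restrict_mem measurableSet_Ioi).mono fun x hx =>
      pt_bound w hsm (le_of_lt hx))
  have step2 : ∀ x ∈ Ioi (0:ℝ), ENNReal.ofReal (2 * Real.exp x) * ∫⁻ t in Ioi x, f t
      = ∫⁻ t in Ioi (0:ℝ), K x t := by
    intro x hx
    rw [hK]
    simp only []
    rw [lintegral_const_mul' _ _ ENNReal.ofReal_ne_top]
    congr 1
    rw [lintegral_indicator measurableSet_Ioi, Measure.restrict_restrict measurableSet_Ioi,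
      inter_eq_self_of_subset_left (Ioi_subset_Ioi (le_of_lt hx))]
  have hKswap : ∫⁻ x in Ioi (0:ℝ), ∫⁻ t in Ioi (0:ℝ), K x t
      = ∫⁻ t in Ioi (0:ℝ), ∫⁻ x in Ioi (0:ℝ), K x t := by
    refine lintegral_lintegral_swap ?_
    have huncurry : Function.uncurry K = fun p : ℝ × ℝ =>
        ENNReal.ofReal (2 * Real.exp p.1) *
          {q : ℝ × ℝ | q.1 < q.2}.indicator (fun q => f q.2) p := by
      ext p
      simp only [Function.uncurry, hK, Set.indicator_apply, mem_Ioi, mem_setOf_eq]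
    rw [huncurry]
    exact (((continuous_const.mul (Real.continuous_exp.comp continuous_fst)).measurable).ennreal_ofReal.mul
      ((hfmeas.comp measurable_snd).indicator
        (measurableSet_lt measurable_fst measurable_snd))).aemeasurable
  have step3 : ∀ t ∈ Ioi (0:ℝ), ∫⁻ x in Ioi (0:ℝ), K x t ≤ 4 * Wf w t ^ (2:ℝ) := by
    intro t ht
    have hKeq : ∀ x, K x t
        = (Iio t).indicator (fun x => ENNReal.ofReal (2 * Real.exp x)) x * f t := by
      intro x
      by_cases h : x < t
      · simp [hK, Set.indicator_apply, mem_Ioi, mem_Iio, h]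
      · simp [hK, Set.indicator_apply, mem_Ioi, mem_Iio, h]
    have hftop : f t ≠ ⊤ :=
      ENNReal.mul_ne_top ENNReal.ofReal_ne_top
        (ENNReal.rpow_ne_top_of_nonneg (by norm_num) ENNReal.coe_ne_top)
    calc ∫⁻ x in Ioi (0:ℝ), K x t
        = (∫⁻ x in Ioi (0:ℝ),
            (Iio t).indicator (fun x => ENNReal.ofReal (2 * Real.exp x)) x) * f t := by
          simp_rw [hKeq]; exact lintegral_mul_const' _ _ hftop
      _ ≤ ENNReal.ofReal (2 * Real.exp t) * f t := by
          refine mul_le_mul_left ?_ _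
          rw [lintegral_indicator measurableSet_Iio, Measure.restrict_restrict measurableSet_Iio]
          have hinter : Iio t ∩ Ioi 0 = Ioo 0 t := by rw [inter_comm, Set.Ioi_inter_Iio]
          rw [hinter, Measure.restrict_congr_set Ioo_ae_eq_Ioc]
          have hint : IntegrableOn (fun x : ℝ => 2 * Real.exp x) (Ioc 0 t) volume :=
            (continuous_const.mul Real.continuous_exp).integrableOn_Ioc
          rw [← ofReal_integral_eq_lintegral_ofReal hint
            (Eventually.of_forall fun x => by positivity)]
          refine ENNReal.ofReal_le_ofReal ?_
          rw [← intervalIntegral.integral_of_le (le_of_lt ht),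
            intervalIntegral.integral_const_mul, integral_exp]
          nlinarith [Real.exp_pos t, Real.exp_zero]
      _ ≤ 4 * Wf w t ^ (2:ℝ) := by
          rw [hf]
          simp only []
          rw [← mul_assoc]
          refine mul_le_mul_left ?_ _
          calc ENNReal.ofReal (2 * Real.exp t) * Af t
              = ENNReal.ofReal (2 * Real.exp t * (Real.cosh t)⁻¹) :=
                (ENNReal.ofReal_mul (by positivity)).symm
            _ ≤ ENNReal.ofReal 4 :=
                ENNReal.ofReal_le_ofReal (by nlinarith [sech_mul_exp_le t, Real.exp_pos t])
            _ = 4 := by norm_num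
  calc ∫⁻ x in Ioi (0:ℝ),
        (‖Real.cosh x • ∫ t in Ioi x, (Real.cosh t)⁻¹ • w t‖₊ : ℝ≥0∞) ^ (2:ℝ)
      ≤ ∫⁻ x in Ioi (0:ℝ), ENNReal.ofReal (2 * Real.exp x) * ∫⁻ t in Ioi x, f t := step1
    _ = ∫⁻ x in Ioi (0:ℝ), ∫⁻ t in Ioi (0:ℝ), K x t :=
        setLIntegral_congr_fun measurableSet_Ioi step2
    _ = ∫⁻ t in Ioi (0:ℝ), ∫⁻ x in Ioi (0:ℝ), K x t := hKswap
    _ ≤ ∫⁻ t in Ioi (0:ℝ), 4 * Wf w t ^ (2:ℝ) :=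
        lintegral_mono_ae ((ae_restrict_mem measurableSet_Ioi).mono step3)
    _ = 4 * ∫⁻ t in Ioi (0:ℝ), Wf w t ^ (2:ℝ) :=
        lintegral_const_mul' _ _ (by norm_num)
end

lemma F_aesm (w : ℝ → ℂ) (hg : IntegrableOn (fun t => (Real.cosh t)⁻¹ • w t) (Set.Ioi (0:ℝ)) volume) :
    AEStronglyMeasurable (fun x : ℝ => Real.cosh x • ∫ t in Set.Ioi x, (Real.cosh t)⁻¹ • w t)
      (volume.restrict (Set.Ioi (0:ℝ))) := by
  set g : ℝ → ℂ := fun t => (Real.cosh t)⁻¹ • w t with hgdef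
  set g₀ : ℝ → ℂ := (Ioi (0:ℝ)).indicator g with hg₀def
  have hg₀ : Integrable g₀ volume := hg.integrable_indicator measurableSet_Ioi
  have hP : Continuous fun x : ℝ => ∫ t in (0:ℝ)..x, g₀ t :=
    intervalIntegral.continuous_primitive (fun a b => hg₀.intervalIntegrable) 0
  set C₀ : ℂ := ∫ t in Ioi (0:ℝ), g₀ t with hC₀
  have heq : ∀ x ∈ Ioi (0:ℝ),
      Real.cosh x • ∫ t in Ioi x, g t = Real.cosh x • (C₀ - ∫ t in (0:ℝ)..x, g₀ t) := by
    intro x hx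
    have hx' : (0:ℝ) ≤ x := le_of_lt hx
    have hsplit : C₀ = (∫ t in Ioc 0 x, g₀ t) + ∫ t in Ioi x, g₀ t := by
      rw [hC₀, ← setIntegral_union (Ioc_disjoint_Ioi le_rfl) measurableSet_Ioi
        hg₀.integrableOn hg₀.integrableOn, Ioc_union_Ioi_eq_Ioi hx']
    have h2 : ∫ t in Ioi x, g₀ t = ∫ t in Ioi x, g t :=
      setIntegral_congr_fun measurableSet_Ioi fun t ht => Set.indicator_of_mem (lt_trans hx ht) g
    rw [intervalIntegral.integral_of_le hx', hsplit, h2]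
    congr 1
    abel
  have hcont : Continuous fun x : ℝ => Real.cosh x • (C₀ - ∫ t in (0:ℝ)..x, g₀ t) :=
    Real.continuous_cosh.smul (continuous_const.sub hP)
  refine hcont.aestronglyMeasurable.restrict.congr ?_
  exact ((ae_restrict_mem measurableSet_Ioi).mono fun x hx => (heq x hx).symm)

lemma sech_memL2 : MemLp (fun t : ℝ => (Real.cosh t)⁻¹) 2 (volume.restrict (Set.Ioi (0:ℝ))) := by
  have hc : Continuous fun t : ℝ => (Real.cosh t)⁻¹ :=
    Real.continuous_cosh.inv₀ fun t => (Real.cosh_pos t).ne'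
  rw [memLp_two_iff_integrable_sq hc.aestronglyMeasurable]
  have hint : IntegrableOn (fun t : ℝ => 4 * Real.exp (-2 * t)) (Set.Ioi 0) volume :=
    (exp_neg_integrableOn_Ioi 0 two_pos).const_mul 4
  refine hint.mono' (hc.pow 2).aestronglyMeasurable.restrict ?_
  refine Eventually.of_forall fun t => ?_
  have h1 : 0 < (Real.cosh t)⁻¹ := inv_pos.mpr (Real.cosh_pos t)
  have h2 := sech_le t
  have h3 : Real.exp (-2 * t) = Real.exp (-t) ^ 2 := by
    rw [← Real.exp_nat_mul]; ring_nf
  rw [Real.norm_eq_abs, abs_of_nonneg (by positivity), h3]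
  nlinarith [Real.exp_pos (-t)]

lemma sechw_int (w : ℝ → ℂ) (hw : MemLp w 2 (volume.restrict (Set.Ioi (0:ℝ)))) :
    IntegrableOn (fun t => (Real.cosh t)⁻¹ • w t) (Set.Ioi (0:ℝ)) volume := by
  rw [IntegrableOn, ← memLp_one_iff_integrable]
  exact hw.smul sech_memL2

lemma four_rpow_half : (4:ℝ≥0∞) ^ (1/2:ℝ) = 2 := by
  have h42 : (4:ℝ≥0∞) = (2:ℝ≥0∞) ^ (2:ℝ) := by
    rw [show ((2:ℝ)) = ((2:ℕ):ℝ) by norm_num, ENNReal.rpow_natCast]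
    norm_num
  rw [h42, ← ENNReal.rpow_mul]
  norm_num

lemma pos_side (w : ℝ → ℂ) (hw : MemLp w 2 (volume.restrict (Set.Ioi (0:ℝ)))) :
    MemLp (fun x : ℝ => Real.cosh x • ∫ t in Set.Ioi x, (Real.cosh t)⁻¹ • w t) 2
        (volume.restrict (Set.Ioi (0:ℝ))) ∧
      eLpNorm (fun x : ℝ => Real.cosh x • ∫ t in Set.Ioi x, (Real.cosh t)⁻¹ • w t) 2
        (volume.restrict (Set.Ioi (0:ℝ)))
        ≤ 2 * eLpNorm w 2 (volume.restrict (Set.Ioi (0:ℝ))) := by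
  set μ := volume.restrict (Set.Ioi (0:ℝ)) with hμ
  set w' := hw.1.mk w with hw'def
  have hsm' : MeasureTheory.StronglyMeasurable w' := hw.1.stronglyMeasurable_mk
  have hww' : w =ᵐ[μ] w' := hw.1.ae_eq_mk
  have hw' : MemLp w' 2 μ := hw.ae_eq hww'
  have hFF' : (fun x : ℝ => Real.cosh x • ∫ t in Set.Ioi x, (Real.cosh t)⁻¹ • w t)
      =ᵐ[μ] (fun x : ℝ => Real.cosh x • ∫ t in Set.Ioi x, (Real.cosh t)⁻¹ • w' t) := by
    refine (ae_restrict_mem measurableSet_Ioi).mono fun x hx => ?_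
    have hsub : Set.Ioi x ⊆ Set.Ioi (0:ℝ) := Set.Ioi_subset_Ioi (le_of_lt hx)
    have : w =ᵐ[volume.restrict (Set.Ioi x)] w' :=
      ae_restrict_of_ae_restrict_of_subset hsub hww'
    have : (fun t => (Real.cosh t)⁻¹ • w t) =ᵐ[volume.restrict (Set.Ioi x)]
        (fun t => (Real.cosh t)⁻¹ • w' t) := this.mono fun t ht => by simp only [ht]
    simp only []
    rw [integral_congr_ae this]
  have hkey : eLpNorm (fun x : ℝ => Real.cosh x • ∫ t in Set.Ioi x, (Real.cosh t)⁻¹ • w' t) 2 μ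
      ≤ 2 * eLpNorm w' 2 μ := by
    rw [eLpNorm_eq_lintegral_rpow_enorm_toReal two_ne_zero ENNReal.ofNat_ne_top,
      eLpNorm_eq_lintegral_rpow_enorm_toReal two_ne_zero ENNReal.ofNat_ne_top]
    simp only [ENNReal.toReal_ofNat]
    have h4 := J_bound w' hsm'
    calc (∫⁻ x in Set.Ioi (0:ℝ),
            (‖Real.cosh x • ∫ t in Set.Ioi x, (Real.cosh t)⁻¹ • w' t‖₊ : ℝ≥0∞) ^ (2:ℝ)) ^ (1/2:ℝ)
        ≤ (4 * ∫⁻ t in Set.Ioi (0:ℝ), Wf w' t ^ (2:ℝ)) ^ (1/2:ℝ) :=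
          ENNReal.rpow_le_rpow h4 (by norm_num)
      _ = 2 * (∫⁻ t in Set.Ioi (0:ℝ), Wf w' t ^ (2:ℝ)) ^ (1/2:ℝ) := by
          rw [ENNReal.mul_rpow_of_nonneg _ _ (by norm_num : (0:ℝ) ≤ 1/2), four_rpow_half]
  have haesm' : AEStronglyMeasurable
      (fun x : ℝ => Real.cosh x • ∫ t in Set.Ioi x, (Real.cosh t)⁻¹ • w' t) μ :=
    F_aesm w' (sechw_int w' hw')
  have hmem' : MemLp (fun x : ℝ => Real.cosh x • ∫ t in Set.Ioi x, (Real.cosh t)⁻¹ • w' t) 2 μ :=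
    ⟨haesm', lt_of_le_of_lt hkey (ENNReal.mul_lt_top (by norm_num) hw'.2)⟩
  constructor
  · exact hmem'.ae_eq hFF'.symm
  · rw [eLpNorm_congr_ae hFF', eLpNorm_congr_ae hww']
    exact hkey

lemma neg_side (w : ℝ → ℂ) (hw : MemLp w 2 (volume.restrict (Set.Iio (0:ℝ)))) :
    MemLp (fun x : ℝ => Real.cosh x • ∫ t in Set.Iio x, (Real.cosh t)⁻¹ • w t) 2
        (volume.restrict (Set.Iio (0:ℝ))) ∧
      eLpNorm (fun x : ℝ => Real.cosh x • ∫ t in Set.Iio x, (Real.cosh t)⁻¹ • w t) 2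
        (volume.restrict (Set.Iio (0:ℝ)))
        ≤ 2 * eLpNorm w 2 (volume.restrict (Set.Iio (0:ℝ))) := by
  have hpre : (Neg.neg ⁻¹' Set.Ioi (0:ℝ)) = Set.Iio 0 := by ext y; simp
  have hmp₁ : MeasurePreserving Neg.neg (volume.restrict (Set.Iio (0:ℝ)))
      (volume.restrict (Set.Ioi (0:ℝ))) := by
    have := (Measure.measurePreserving_neg (volume : Measure ℝ)).restrict_preimage
      (measurableSet_Ioi (a := (0:ℝ)))
    rwa [hpre] at this
  have hpre' : (Neg.neg ⁻¹' Set.Iio (0:ℝ)) = Set.Ioi 0 := by ext y; simp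
  have hmp₂ : MeasurePreserving Neg.neg (volume.restrict (Set.Ioi (0:ℝ)))
      (volume.restrict (Set.Iio (0:ℝ))) := by
    have := (Measure.measurePreserving_neg (volume : Measure ℝ)).restrict_preimage
      (measurableSet_Iio (a := (0:ℝ)))
    rwa [hpre'] at this
  set w' : ℝ → ℂ := fun s => w (-s) with hw'def
  have hw' : MemLp w' 2 (volume.restrict (Set.Ioi (0:ℝ))) :=
    hw.comp_measurePreserving hmp₂
  obtain ⟨hmem, hbound⟩ := pos_side w' hw'
  have hFeq : (fun x : ℝ => Real.cosh x • ∫ t in Set.Iio x, (Real.cosh t)⁻¹ • w t)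
      = (fun y : ℝ => Real.cosh y • ∫ t in Set.Ioi y, (Real.cosh t)⁻¹ • w' t) ∘ Neg.neg := by
    funext x
    have h1 : ∫ s in Set.Ioi (-x), (Real.cosh s)⁻¹ • w' s
        = ∫ t in Set.Iio x, (Real.cosh t)⁻¹ • w t := by
      have h2 : ∫ s in Set.Ioi (-x), (Real.cosh s)⁻¹ • w' s
          = ∫ s in Set.Ioi (-x), (fun t => (Real.cosh t)⁻¹ • w t) (-s) :=
        integral_congr_ae (Eventually.of_forall fun s => by simp [Real.cosh_neg, hw'def])
      exact h2.trans ((integral_comp_neg_Ioi (-x) (fun t => (Real.cosh t)⁻¹ • w t)).trans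
        (by rw [neg_neg, ← Measure.restrict_congr_set Iio_ae_eq_Iic]))
    simp only [Function.comp_apply, Real.cosh_neg]
    rw [h1]
  constructor
  · rw [hFeq]
    exact hmem.comp_measurePreserving hmp₁
  · rw [hFeq, eLpNorm_comp_measurePreserving hmem.1 hmp₁]
    have : eLpNorm w' 2 (volume.restrict (Set.Ioi (0:ℝ)))
        = eLpNorm w 2 (volume.restrict (Set.Iio (0:ℝ))) :=
      eLpNorm_comp_measurePreserving hw.1 hmp₂
    rw [← this]
    exact hbound

theorem stmt_0 :
    (∀ w : ℝ → ℂ, MemLp w 2 (volume.restrict (Set.Ioi (0:ℝ))) →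
      MemLp (fun x : ℝ => Real.cosh x • ∫ t in Set.Ioi x, (Real.cosh t)⁻¹ • w t) 2
        (volume.restrict (Set.Ioi (0:ℝ))) ∧
      eLpNorm (fun x : ℝ => Real.cosh x • ∫ t in Set.Ioi x, (Real.cosh t)⁻¹ • w t) 2
        (volume.restrict (Set.Ioi (0:ℝ)))
        ≤ 2 * eLpNorm w 2 (volume.restrict (Set.Ioi (0:ℝ)))) ∧
    (∀ w : ℝ → ℂ, MemLp w 2 (volume.restrict (Set.Iio (0:ℝ))) →
      MemLp (fun x : ℝ => Real.cosh x • ∫ t in Set.Iio x, (Real.cosh t)⁻¹ • w t) 2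
        (volume.restrict (Set.Iio (0:ℝ))) ∧
      eLpNorm (fun x : ℝ => Real.cosh x • ∫ t in Set.Iio x, (Real.cosh t)⁻¹ • w t) 2
        (volume.restrict (Set.Iio (0:ℝ)))
        ≤ 2 * eLpNorm w 2 (volume.restrict (Set.Iio (0:ℝ)))) :=
  ⟨pos_side, neg_side⟩
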